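/- (Approximation error bound under manipulated costs.) Let P ∈ ℝ^{n×n} be row-stochastic with stationary distribution π, D = diag(π), α ∈ (0,1), λ ∈ [0,1], and let Φ ∈ ℝ^{n×K} have linearly independent columns. Define M := (1−λ) Σ_{m=0}^∞ λ^m α^{m+1} P^{m+1}, A := Φᵀ D (M − I) Φ, b(c) := Φᵀ D Σ_{m=0}^∞ (αλ)^m P^m c for c ∈ ℝ^n, the projection Π := Φ(Φᵀ D Φ)^{-1} Φᵀ D, and the cost-to-go vector J^μ := (I − α P)^{-1} ḡ for true cost vector ḡ ∈ ℝ^n. If r* and r̃* satisfy A r* + b(ḡ) = 0 and A r̃* + b(g̃) = 0 for a manipulated cost vector g̃ ∈ ℝ^n, then ‖Φ r̃* − J^μ‖_D ≤ ‖Φ r̃* − Φ r*‖_D + ((1−λα)/√((1−α)(1+α−2λα))) · ‖(Π − I) J^μ‖_D. -/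

import Mathlib

open Matrix

noncomputable def normD {n : ℕ} (pi : Fin n → ℝ) (J : Fin n → ℝ) : ℝ :=
  Real.sqrt (∑ i, pi i * (J i) ^ 2)

section aux
variable {n : ℕ} (pi : Fin n → ℝ)

lemma normD_nonneg (x : Fin n → ℝ) : 0 ≤ normD pi x := Real.sqrt_nonneg _

lemma normD_sq (hpi0 : ∀ i, 0 ≤ pi i) (x : Fin n → ℝ) :
    normD pi x ^ 2 = ∑ i, pi i * (x i) ^ 2 :=
  Real.sq_sqrt (Finset.sum_nonneg fun i _ => mul_nonneg (hpi0 i) (sq_nonneg _))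

noncomputable def eD : (Fin n → ℝ) →L[ℝ] EuclideanSpace ℝ (Fin n) :=
  LinearMap.toContinuousLinearMap
    { toFun := fun x => WithLp.toLp 2 (fun i => Real.sqrt (pi i) * x i)
      map_add' := by intro x y; ext i; simp [mul_add]
      map_smul' := by intro c x; ext i; simp [Pi.smul_apply, smul_eq_mul]; ring }

lemma normD_eq_norm_eD (hpi0 : ∀ i, 0 ≤ pi i) (x : Fin n → ℝ) :
    normD pi x = ‖eD pi x‖ := by
  rw [EuclideanSpace.norm_eq]
  unfold normD
  congr 1
  apply Finset.sum_congr rfl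
  intro i _
  have : eD pi x i = Real.sqrt (pi i) * x i := rfl
  rw [this, Real.norm_eq_abs, sq_abs, mul_pow, Real.sq_sqrt (hpi0 i)]

lemma normD_smul (hpi0 : ∀ i, 0 ≤ pi i) (c : ℝ) (x : Fin n → ℝ) :
    normD pi (c • x) = |c| * normD pi x := by
  rw [normD_eq_norm_eD pi hpi0, normD_eq_norm_eD pi hpi0, (eD pi).map_smul, norm_smul,
    Real.norm_eq_abs]

lemma normD_add_le (hpi0 : ∀ i, 0 ≤ pi i) (x y : Fin n → ℝ) :
    normD pi (x + y) ≤ normD pi x + normD pi y := by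
  rw [normD_eq_norm_eD pi hpi0, normD_eq_norm_eD pi hpi0, normD_eq_norm_eD pi hpi0, map_add]
  exact norm_add_le _ _

lemma normD_tsum_le (hpi0 : ∀ i, 0 ≤ pi i) (f : ℕ → Fin n → ℝ) (hf : Summable f)
    (g : ℕ → ℝ) (hg : Summable g) (hfg : ∀ m, normD pi (f m) ≤ g m) :
    normD pi (∑' m, f m) ≤ ∑' m, g m := by
  rw [normD_eq_norm_eD pi hpi0, ContinuousLinearMap.map_tsum _ hf]
  have hsum : Summable fun m => ‖eD pi (f m)‖ := by
    apply Summable.of_nonneg_of_le (fun m => norm_nonneg _) (fun m => ?_) hg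
    rw [← normD_eq_norm_eD pi hpi0]; exact hfg m
  refine (norm_tsum_le_tsum_norm hsum).trans ?_
  apply Summable.tsum_le_tsum _ hsum hg
  intro m
  rw [← normD_eq_norm_eD pi hpi0]; exact hfg m

lemma normD_pythagoras (hpi0 : ∀ i, 0 ≤ pi i) (x y : Fin n → ℝ)
    (h : ∑ i, pi i * x i * y i = 0) :
    normD pi (x + y) ^ 2 = normD pi x ^ 2 + normD pi y ^ 2 := by
  rw [normD_sq pi hpi0, normD_sq pi hpi0, normD_sq pi hpi0]
  have : ∀ i, pi i * ((x + y) i) ^ 2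
      = pi i * (x i) ^ 2 + pi i * (y i) ^ 2 + 2 * (pi i * x i * y i) := by
    intro i; simp only [Pi.add_apply]; ring
  rw [Finset.sum_congr rfl fun i _ => this i]
  rw [Finset.sum_add_distrib, Finset.sum_add_distrib, ← Finset.mul_sum, h]
  ring

lemma normD_stochastic_contraction (hpi0 : ∀ i, 0 ≤ pi i) (P : Matrix (Fin n) (Fin n) ℝ)
    (hP0 : ∀ i j, 0 ≤ P i j) (hP1 : ∀ i, ∑ j, P i j = 1)
    (hstat : ∀ j, ∑ i, pi i * P i j = pi j) (x : Fin n → ℝ) :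
    normD pi (P.mulVec x) ≤ normD pi x := by
  apply Real.sqrt_le_sqrt
  calc ∑ i, pi i * (P.mulVec x i) ^ 2
      ≤ ∑ i, pi i * (∑ j, P i j * (x j) ^ 2) := by
        apply Finset.sum_le_sum
        intro i _
        apply mul_le_mul_of_nonneg_left _ (hpi0 i)
        have := Finset.sum_sq_le_sum_mul_sum_of_sq_eq_mul (Finset.univ : Finset (Fin n))
          (r := fun j => P i j * x j) (f := fun j => P i j) (g := fun j => P i j * (x j) ^ 2)
          (fun j _ => hP0 i j) (fun j _ => mul_nonneg (hP0 i j) (sq_nonneg _))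
          (fun j _ => by ring)
        rw [hP1 i, one_mul] at this
        exact this
    _ = ∑ i, ∑ j, pi i * P i j * (x j) ^ 2 := by
        apply Finset.sum_congr rfl; intro i _; rw [Finset.mul_sum]
        apply Finset.sum_congr rfl; intro j _; ring
    _ = ∑ j, ∑ i, pi i * P i j * (x j) ^ 2 := Finset.sum_comm
    _ = ∑ j, pi j * (x j) ^ 2 := by
        apply Finset.sum_congr rfl; intro j _
        rw [← Finset.sum_mul, hstat j]

lemma normD_pow_contraction (hpi0 : ∀ i, 0 ≤ pi i) (P : Matrix (Fin n) (Fin n) ℝ)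
    (hP0 : ∀ i j, 0 ≤ P i j) (hP1 : ∀ i, ∑ j, P i j = 1)
    (hstat : ∀ j, ∑ i, pi i * P i j = pi j) (m : ℕ) (x : Fin n → ℝ) :
    normD pi ((P ^ m).mulVec x) ≤ normD pi x := by
  induction m with
  | zero => simp [Matrix.one_mulVec]
  | succ k ih =>
    rw [pow_succ', ← Matrix.mulVec_mulVec]
    exact (normD_stochastic_contraction pi hpi0 P hP0 hP1 hstat _).trans ih

end aux

section matrixaux

attribute [local instance] Matrix.linftyOpNormedAddCommGroup Matrix.linftyOpNormedRing
  Matrix.linftyOpNormedAlgebra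

variable {n : ℕ}

lemma norm_stochastic_le_one (P : Matrix (Fin n) (Fin n) ℝ)
    (hP0 : ∀ i j, 0 ≤ P i j) (hP1 : ∀ i, ∑ j, P i j = 1) : ‖P‖ ≤ 1 := by
  rw [Matrix.linfty_opNorm_def]
  rw [show (1 : ℝ) = ((1 : NNReal) : ℝ) by simp]
  rw [NNReal.coe_le_coe]
  apply Finset.sup_le
  intro i _
  rw [← NNReal.coe_le_coe]
  push_cast
  calc (∑ j, ‖P i j‖) = ∑ j, P i j := by
        apply Finset.sum_congr rfl; intro j _; rw [Real.norm_eq_abs, abs_of_nonneg (hP0 i j)]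
    _ = 1 := hP1 i
    _ ≤ _ := le_refl _

set_option maxHeartbeats 2000000 in
theorem TD_aux
    {n K : ℕ} (P : Matrix (Fin n) (Fin n) ℝ)
    (hP0 : ∀ i j, 0 ≤ P i j) (hP1 : ∀ i, ∑ j, P i j = 1)
    (pi : Fin n → ℝ) (hpi0 : ∀ i, 0 < pi i) (hpi1 : ∑ i, pi i = 1)
    (hstat : ∀ j, ∑ i, pi i * P i j = pi j)
    (α lam : ℝ) (hα0 : 0 < α) (hα1 : α < 1) (hlam0 : 0 ≤ lam) (hlam1 : lam ≤ 1)
    (Φ : Matrix (Fin n) (Fin K) ℝ)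
    (hΦ : LinearIndependent ℝ (fun k : Fin K => fun i : Fin n => Φ i k))
    (D : Matrix (Fin n) (Fin n) ℝ) (hD : D = Matrix.diagonal pi)
    (M : Matrix (Fin n) (Fin n) ℝ)
    (hM : M = (1 - lam) • ∑' m : ℕ, (lam ^ m * α ^ (m + 1)) • P ^ (m + 1))
    (A : Matrix (Fin K) (Fin K) ℝ) (hA : A = Φᵀ * D * (M - 1) * Φ)
    (b : (Fin n → ℝ) → (Fin K → ℝ))
    (hb : ∀ c, b c = (Φᵀ * D * ∑' m : ℕ, (α * lam) ^ m • P ^ m).mulVec c)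
    (Pr : Matrix (Fin n) (Fin n) ℝ) (hPr : Pr = Φ * (Φᵀ * D * Φ)⁻¹ * Φᵀ * D)
    (gbar gt : Fin n → ℝ)
    (Jμ : Fin n → ℝ) (hJμ : Jμ = ((1 - α • P)⁻¹).mulVec gbar)
    (rstar rtstar : Fin K → ℝ)
    (hrstar : A.mulVec rstar + b gbar = 0)
    (hrtstar : A.mulVec rtstar + b gt = 0) :
    normD pi (Φ.mulVec rtstar - Jμ) ≤
      normD pi (Φ.mulVec rtstar - Φ.mulVec rstar) +
        ((1 - lam * α) / Real.sqrt ((1 - α) * (1 + α - 2 * lam * α))) *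
          normD pi ((Pr - 1).mulVec Jμ) := by
  haveI : CompleteSpace (Matrix (Fin n) (Fin n) ℝ) := FiniteDimensional.complete ℝ _
  have hpi0' : ∀ i, 0 ≤ pi i := fun i => (hpi0 i).le
  have hPnorm : ‖P‖ ≤ 1 := norm_stochastic_le_one P hP0 hP1
  have hαlam0 : 0 ≤ α * lam := mul_nonneg hα0.le hlam0
  have hαlam1 : α * lam < 1 :=
    lt_of_le_of_lt (by nlinarith : α * lam ≤ α) hα1
  -- geometric series N
  set Q : Matrix (Fin n) (Fin n) ℝ := (α * lam) • P with hQ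
  have hQnorm : ‖Q‖ < 1 := by
    rw [hQ, norm_smul, Real.norm_eq_abs, abs_of_nonneg hαlam0]
    calc α * lam * ‖P‖ ≤ α * lam * 1 := by nlinarith [norm_nonneg P]
      _ < 1 := by simpa using hαlam1
  have hQsum : Summable (fun m => Q ^ m) := summable_geometric_of_norm_lt_one hQnorm
  set N : Matrix (Fin n) (Fin n) ℝ := ∑' m, Q ^ m with hN
  have hNg1 : N * (1 - Q) = 1 := geom_series_mul_neg Q hQnorm
  have hNg2 : (1 - Q) * N = 1 := mul_neg_geom_series Q hQnorm
  have hQpow : ∀ m : ℕ, Q ^ m = (α * lam) ^ m • P ^ m := fun m => smul_pow _ _ _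
  have hNtsum : (∑' m : ℕ, (α * lam) ^ m • P ^ m) = N := by
    rw [hN]; exact (tsum_congr hQpow).symm
  -- the series for M
  have hFeq : ∀ m : ℕ, (lam ^ m * α ^ (m + 1)) • P ^ (m + 1) = (α • P) * Q ^ m := by
    intro m
    rw [hQpow, Matrix.mul_smul, Matrix.smul_mul, smul_smul, ← pow_succ']
    congr 1
    rw [mul_pow]
    ring
  have hFsum : Summable (fun m : ℕ => (lam ^ m * α ^ (m + 1)) • P ^ (m + 1)) := by
    rw [show (fun m : ℕ => (lam ^ m * α ^ (m + 1)) • P ^ (m + 1))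
      = fun m => (α • P) * Q ^ m from funext hFeq]
    exact hQsum.mul_left _
  have hMser : M = ((1 - lam) * α) • (P * N) := by
    rw [hM, tsum_congr hFeq, hQsum.tsum_mul_left, hN]
    rw [Matrix.smul_mul, smul_smul]
  -- commute
  have hPN : P * N = N * P :=
    (Commute.tsum_right P (fun m => ((Commute.refl P).smul_right (α * lam)).pow_right m)).eq

  -- key identity: N * (1 - α • P) = 1 - M
  have hNid : N * (1 - α • P) = 1 - M := by
    have e1 : N - (α * lam) • (N * P) = 1 := by
      have : N * Q = (α * lam) • (N * P) := by rw [hQ, Matrix.mul_smul]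
      rw [← this, ← hNg1, mul_sub, mul_one]
    have e2 : N * (1 - α • P) = N - α • (N * P) := by
      rw [mul_sub, mul_one, Matrix.mul_smul]
    rw [e2, hMser, hPN]
    have e3 : (α * lam) • (N * P) - α • (N * P) = -(((1 - lam) * α) • (N * P)) := by
      rw [← sub_smul, ← neg_smul]; congr 1; ring
    calc N - α • (N * P)
        = (N - (α * lam) • (N * P)) + ((α * lam) • (N * P) - α • (N * P)) := by abel
      _ = 1 - ((1 - lam) * α) • (N * P) := by rw [e1, e3]; abel
  -- invertibility of 1 - α • P
  have hαPnorm : ‖α • P‖ < 1 := by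
    rw [norm_smul, Real.norm_eq_abs, abs_of_nonneg hα0.le]
    nlinarith [norm_nonneg P]
  have hRg : (1 - α • P) * (∑' m, (α • P) ^ m) = 1 := mul_neg_geom_series _ hαPnorm
  have hJfix : (1 - α • P).mulVec Jμ = gbar := by
    rw [hJμ, Matrix.mulVec_mulVec, Matrix.inv_eq_right_inv hRg, hRg, Matrix.one_mulVec]
  -- T Jμ = Jμ
  have hTJ : M.mulVec Jμ + N.mulVec gbar = Jμ := by
    rw [← hJfix, Matrix.mulVec_mulVec, hNid, Matrix.sub_mulVec, Matrix.one_mulVec]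
    abel
  -- G is invertible
  set G : Matrix (Fin K) (Fin K) ℝ := Φᵀ * D * Φ with hG
  have hquad : ∀ v : Fin K → ℝ, v ⬝ᵥ G.mulVec v = ∑ i, pi i * (Φ.mulVec v i) ^ 2 := by
    intro v
    have h1 : G.mulVec v = Φᵀ.mulVec ((Matrix.diagonal pi).mulVec (Φ.mulVec v)) := by
      rw [Matrix.mulVec_mulVec, Matrix.mulVec_mulVec, ← hD, ← hG]
    rw [h1, Matrix.dotProduct_mulVec, Matrix.vecMul_transpose]
    unfold dotProduct
    apply Finset.sum_congr rfl
    intro i _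
    rw [Matrix.mulVec_diagonal]
    ring
  have hGdet : IsUnit G.det := by
    by_contra hcon
    have h0 : G.det = 0 := by
      rcases eq_or_ne G.det 0 with h | h
      · exact h
      · exact absurd (IsUnit.mk0 _ h) hcon
    obtain ⟨v, hv, hGv⟩ := (Matrix.exists_mulVec_eq_zero_iff).2 h0
    have hzero : ∑ i, pi i * (Φ.mulVec v i) ^ 2 = 0 := by
      rw [← hquad, hGv, dotProduct_zero]
    have hΦv : Φ.mulVec v = 0 := by
      funext i
      have := (Finset.sum_eq_zero_iff_of_nonneg
        (fun i _ => mul_nonneg (hpi0' i) (sq_nonneg _))).1 hzero i (Finset.mem_univ i)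
      have h2 : (Φ.mulVec v i) ^ 2 = 0 := by
        rcases mul_eq_zero.1 this with h | h
        · exact absurd h (ne_of_gt (hpi0 i))
        · exact h
      simpa using pow_eq_zero_iff (n := 2) (by norm_num) |>.1 h2
    apply hv
    funext k
    have := Fintype.linearIndependent_iff.1 hΦ v ?_ k
    · exact this
    · funext i
      rw [← congrFun hΦv i]
      simp [Matrix.mulVec, dotProduct, Finset.sum_apply, mul_comm]
  have hGinv : G⁻¹ * G = 1 := Matrix.nonsing_inv_mul G hGdet
  have hGinv' : G * G⁻¹ = 1 := Matrix.mul_nonsing_inv G hGdet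
  -- projection facts
  have hPrΦ : Pr * Φ = Φ := by
    rw [hPr]
    calc Φ * G⁻¹ * Φᵀ * D * Φ = Φ * (G⁻¹ * (Φᵀ * D * Φ)) := by
          simp only [Matrix.mul_assoc]
      _ = Φ * (G⁻¹ * G) := by rw [← hG]
      _ = Φ := by rw [hGinv, Matrix.mul_one]
  have hPrPr : Pr * Pr = Pr := by
    rw [hPr]
    calc Φ * G⁻¹ * Φᵀ * D * (Φ * G⁻¹ * Φᵀ * D)
        = Φ * ((G⁻¹ * (Φᵀ * D * Φ)) * (G⁻¹ * (Φᵀ * D))) := by simp only [Matrix.mul_assoc]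
      _ = Φ * (G⁻¹ * (Φᵀ * D)) := by rw [← hG, hGinv, Matrix.one_mul]
      _ = Φ * G⁻¹ * Φᵀ * D := by simp only [Matrix.mul_assoc]
  have hGT : Gᵀ = G := by
    rw [hG, Matrix.transpose_mul, Matrix.transpose_mul, Matrix.transpose_transpose, hD,
      Matrix.diagonal_transpose, Matrix.mul_assoc]
  have hGinvT : (G⁻¹)ᵀ = G⁻¹ := by
    rw [Matrix.transpose_nonsing_inv, hGT]
  have hPrTD : Prᵀ * D = D * Pr := by
    rw [hPr]
    rw [Matrix.transpose_mul, Matrix.transpose_mul, Matrix.transpose_mul,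
      Matrix.transpose_transpose, hGinvT, hD, Matrix.diagonal_transpose]
    simp only [Matrix.mul_assoc]
  have hKey : Prᵀ * (D * (Pr - 1)) = 0 := by
    rw [← Matrix.mul_assoc, hPrTD, Matrix.mul_assoc, Matrix.mul_sub, Matrix.mul_one, hPrPr]
    simp
  -- orthogonality at vector level
  have horth : ∀ a c : Fin n → ℝ,
      ∑ i, pi i * (Pr.mulVec a i) * ((Pr - 1).mulVec c i) = 0 := by
    intro a c
    have h1 : ∑ i, pi i * (Pr.mulVec a i) * ((Pr - 1).mulVec c i)
        = (Pr.mulVec a) ⬝ᵥ ((D * (Pr - 1)).mulVec c) := by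
      rw [← Matrix.mulVec_mulVec]
      unfold dotProduct
      apply Finset.sum_congr rfl
      intro i _
      rw [hD, Matrix.mulVec_diagonal]
      ring
    rw [h1, Matrix.dotProduct_mulVec, ← Matrix.vecMul_transpose, ← Matrix.vecMul_vecMul,
      Matrix.vecMul_vecMul, Matrix.vecMul_vecMul, hKey,
      Matrix.vecMul_zero, zero_dotProduct]
  -- helper: compare via squares
  have le_of_sq : ∀ a c : ℝ, 0 ≤ a → 0 ≤ c → a ^ 2 ≤ c ^ 2 → a ≤ c := by
    intro a c ha hc h
    nlinarith
  -- Pr is nonexpansive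
  have hPrcon : ∀ z : Fin n → ℝ, normD pi (Pr.mulVec z) ≤ normD pi z := by
    intro z
    have hdecomp : z = Pr.mulVec z + (-1 : ℝ) • ((Pr - 1).mulVec z) := by
      rw [Matrix.sub_mulVec, Matrix.one_mulVec]
      funext i
      simp only [Pi.add_apply, Pi.smul_apply, Pi.sub_apply, smul_eq_mul]
      ring
    have hcross : ∑ i, pi i * (Pr.mulVec z i) * (((-1 : ℝ) • ((Pr - 1).mulVec z)) i) = 0 := by
      have h2 : ∀ i, pi i * (Pr.mulVec z i) * (((-1 : ℝ) • ((Pr - 1).mulVec z)) i)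
          = -(pi i * (Pr.mulVec z i) * ((Pr - 1).mulVec z i)) := by
        intro i; simp only [Pi.smul_apply, smul_eq_mul]; ring
      rw [Finset.sum_congr rfl fun i _ => h2 i, Finset.sum_neg_distrib, horth z z, neg_zero]
    have hpyth := normD_pythagoras pi hpi0' (Pr.mulVec z) ((-1 : ℝ) • ((Pr - 1).mulVec z)) hcross
    rw [← hdecomp] at hpyth
    apply le_of_sq _ _ (normD_nonneg pi _) (normD_nonneg pi _)
    nlinarith [sq_nonneg (normD pi ((-1 : ℝ) • ((Pr - 1).mulVec z)))]
  -- fixed point equation for rstar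
  have hBmat : ∀ c, b c = (Φᵀ * D).mulVec (N.mulVec c) := by
    intro c
    rw [hb c, hNtsum, ← Matrix.mulVec_mulVec]
  have hAvec : ∀ r, A.mulVec r = (Φᵀ * D).mulVec ((M - 1).mulVec (Φ.mulVec r)) := by
    intro r
    rw [hA, ← Matrix.mulVec_mulVec, ← Matrix.mulVec_mulVec]
  set w : Fin n → ℝ := M.mulVec (Φ.mulVec rstar) - Φ.mulVec rstar + N.mulVec gbar with hw
  have hFw : (Φᵀ * D).mulVec w = 0 := by
    have h := hrstar
    rw [hAvec, hBmat, Matrix.sub_mulVec, Matrix.one_mulVec] at h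
    rw [hw, Matrix.mulVec_add]
    exact h
  have hPrw : Pr.mulVec w = 0 := by
    have hsplit : Pr = (Φ * G⁻¹) * (Φᵀ * D) := by
      rw [hPr]; simp only [Matrix.mul_assoc]
    rw [hsplit, ← Matrix.mulVec_mulVec, hFw, Matrix.mulVec_zero]
  have hfix : Φ.mulVec rstar = Pr.mulVec (M.mulVec (Φ.mulVec rstar) + N.mulVec gbar) := by
    have h0 := hPrw
    have hw2 : w = (M.mulVec (Φ.mulVec rstar) + N.mulVec gbar) - Φ.mulVec rstar := by
      rw [hw]; abel
    have h1 : Pr.mulVec (Φ.mulVec rstar) = Φ.mulVec rstar := by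
      rw [Matrix.mulVec_mulVec, hPrΦ]
    rw [hw2, Matrix.mulVec_sub, h1] at h0
    exact (sub_eq_zero.mp h0).symm
  -- KEY identity
  set u : Fin n → ℝ := Φ.mulVec rstar - Jμ with hu
  have hKEY : Φ.mulVec rstar - Pr.mulVec Jμ = Pr.mulVec (M.mulVec u) := by
    have t1 : Pr.mulVec Jμ = Pr.mulVec (M.mulVec Jμ + N.mulVec gbar) := by rw [hTJ]
    rw [t1]
    nth_rewrite 1 [hfix]
    have t2 : M.mulVec u = M.mulVec (Φ.mulVec rstar) - M.mulVec Jμ := by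
      rw [hu, Matrix.mulVec_sub]
    rw [t2, ← Matrix.mulVec_sub Pr]
    congr 1
    abel
  -- contraction property of M
  set β : ℝ := (1 - lam) * α / (1 - lam * α) with hβ
  have h1lamα : 0 < 1 - lam * α := by nlinarith
  have hβ0 : 0 ≤ β := by
    apply div_nonneg _ h1lamα.le
    nlinarith
  have hMx : ∀ x : Fin n → ℝ, normD pi (M.mulVec x) ≤ β * normD pi x := by
    intro x
    have hlam1' : (0 : ℝ) ≤ 1 - lam := by linarith
    set mv : Matrix (Fin n) (Fin n) ℝ →L[ℝ] (Fin n → ℝ) :=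
      LinearMap.toContinuousLinearMap
        { toFun := fun B => B.mulVec x
          map_add' := fun B C => Matrix.add_mulVec B C x
          map_smul' := fun c B => Matrix.smul_mulVec c B x } with hmv
    have hmvapp : ∀ B : Matrix (Fin n) (Fin n) ℝ, mv B = B.mulVec x := fun B => rfl
    have hMx1 : M.mulVec x
        = (1 - lam) • ∑' m : ℕ, ((lam ^ m * α ^ (m + 1)) • ((P ^ (m + 1)).mulVec x)) := by
      rw [hM, Matrix.smul_mulVec]
      congr 1
      rw [← hmvapp, ContinuousLinearMap.map_tsum mv hFsum]
      apply tsum_congr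
      intro m
      rw [hmvapp, Matrix.smul_mulVec]
    set g : ℕ → ℝ := fun m => (α * normD pi x) * (lam * α) ^ m with hg
    have hlamα0 : 0 ≤ lam * α := mul_nonneg hlam0 hα0.le
    have hlamα1 : lam * α < 1 := by nlinarith
    have hgsum : Summable g := (summable_geometric_of_lt_one hlamα0 hlamα1).mul_left _
    have hfsum' : Summable fun m : ℕ => (lam ^ m * α ^ (m + 1)) • ((P ^ (m + 1)).mulVec x) := by
      apply Summable.congr (hFsum.map mv.toLinearMap.toAddMonoidHom mv.continuous)
      intro m
      show mv ((lam ^ m * α ^ (m + 1)) • P ^ (m + 1)) = _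
      rw [hmvapp, Matrix.smul_mulVec]
    have hfg : ∀ m, normD pi ((lam ^ m * α ^ (m + 1)) • ((P ^ (m + 1)).mulVec x)) ≤ g m := by
      intro m
      rw [normD_smul pi hpi0']
      have h1 : |lam ^ m * α ^ (m + 1)| = lam ^ m * α ^ (m + 1) :=
        abs_of_nonneg (by positivity)
      rw [h1, hg]
      have h2 := normD_pow_contraction pi hpi0' P hP0 hP1 hstat (m + 1) x
      calc lam ^ m * α ^ (m + 1) * normD pi ((P ^ (m + 1)).mulVec x)
          ≤ lam ^ m * α ^ (m + 1) * normD pi x := by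
            apply mul_le_mul_of_nonneg_left h2 (by positivity)
        _ = (α * normD pi x) * (lam * α) ^ m := by rw [mul_pow]; ring
    have hbound := normD_tsum_le pi hpi0' _ hfsum' g hgsum hfg
    have htsumg : ∑' m, g m = (α * normD pi x) * (1 - lam * α)⁻¹ := by
      rw [hg, tsum_mul_left, tsum_geometric_of_lt_one hlamα0 hlamα1]
    rw [hMx1, normD_smul pi hpi0', abs_of_nonneg hlam1']
    refine le_trans (mul_le_mul_of_nonneg_left (hbound.trans (le_of_eq htsumg)) hlam1') ?_
    apply le_of_eq
    rw [hβ]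
    field_simp
  -- Pythagoras and conclusion
  have hdecu : u = Pr.mulVec (M.mulVec u) + (Pr - 1).mulVec Jμ := by
    rw [← hKEY, Matrix.sub_mulVec, Matrix.one_mulVec, hu]
    funext i; simp only [Pi.add_apply, Pi.sub_apply]; ring
  have hpy := normD_pythagoras pi hpi0' (Pr.mulVec (M.mulVec u)) ((Pr - 1).mulVec Jμ)
    (horth _ _)
  rw [← hdecu] at hpy
  have h2 : normD pi (Pr.mulVec (M.mulVec u)) ≤ β * normD pi u :=
    (hPrcon _).trans (hMx u)
  set dd := normD pi ((Pr - 1).mulVec Jμ) with hdd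
  set e := normD pi u with he
  have hineq : e ^ 2 ≤ β ^ 2 * e ^ 2 + dd ^ 2 := by
    have h3 : normD pi (Pr.mulVec (M.mulVec u)) ^ 2 ≤ (β * e) ^ 2 := by
      nlinarith [normD_nonneg pi (Pr.mulVec (M.mulVec u))]
    nlinarith [hpy]
  set c := (1 - α) * (1 + α - 2 * lam * α) with hc
  have hcpos : 0 < c := by
    have hαα : lam * α ≤ α := by nlinarith
    have hpos2 : 0 < 1 + α - 2 * lam * α := by linarith
    rw [hc]
    exact mul_pos (by linarith) hpos2
  have hsqc : 0 < Real.sqrt c := Real.sqrt_pos.2 hcpos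
  have hβid : (1 - β ^ 2) * (1 - lam * α) ^ 2 = c := by
    rw [hβ, hc]
    field_simp
    ring
  have h4 : (1 - β ^ 2) * e ^ 2 ≤ dd ^ 2 := by nlinarith [hineq]
  have h5 : c * e ^ 2 ≤ (1 - lam * α) ^ 2 * dd ^ 2 := by
    rw [← hβid]
    calc (1 - β ^ 2) * (1 - lam * α) ^ 2 * e ^ 2
        = (1 - lam * α) ^ 2 * ((1 - β ^ 2) * e ^ 2) := by ring
      _ ≤ (1 - lam * α) ^ 2 * dd ^ 2 := mul_le_mul_of_nonneg_left h4 (sq_nonneg _)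
  have he2 : e ≤ (1 - lam * α) / Real.sqrt c * dd := by
    have hdd0 : 0 ≤ dd := normD_nonneg pi _
    apply le_of_sq _ _ (normD_nonneg pi u) ?_ ?_
    · apply mul_nonneg (div_nonneg (by linarith) hsqc.le) hdd0
    · rw [mul_pow, div_pow, Real.sq_sqrt hcpos.le, div_mul_eq_mul_div, le_div_iff₀ hcpos]
      nlinarith
  calc normD pi (Φ.mulVec rtstar - Jμ)
      = normD pi ((Φ.mulVec rtstar - Φ.mulVec rstar) + u) := by
        congr 1
        rw [hu]
        funext i
        simp only [Pi.add_apply, Pi.sub_apply]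
        ring
    _ ≤ normD pi (Φ.mulVec rtstar - Φ.mulVec rstar) + e := by
        rw [he]; exact normD_add_le pi hpi0' _ _
    _ ≤ normD pi (Φ.mulVec rtstar - Φ.mulVec rstar)
        + (1 - lam * α) / Real.sqrt c * dd := by linarith




end matrixaux

/-- Approximation error bound under manipulated costs: with
`M = (1−λ)∑ λ^m α^{m+1} P^{m+1}`, `A = Φᵀ D (M − I) Φ`, `b(c) = Φᵀ D ∑ (αλ)^m P^m c`,
`Π = Φ(Φᵀ D Φ)⁻¹ Φᵀ D` and `J^μ = (I − αP)⁻¹ ḡ`, if `A r* + b(ḡ) = 0` and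
`A r̃* + b(g̃) = 0` then
`‖Φ r̃* − J^μ‖_D ≤ ‖Φ r̃* − Φ r*‖_D + ((1−λα)/√((1−α)(1+α−2λα))) ‖(Π − I) J^μ‖_D`. -/
theorem TD_approximation_error_bound
    {n K : ℕ} (P : Matrix (Fin n) (Fin n) ℝ)
    (hP0 : ∀ i j, 0 ≤ P i j) (hP1 : ∀ i, ∑ j, P i j = 1)
    (pi : Fin n → ℝ) (hpi0 : ∀ i, 0 < pi i) (hpi1 : ∑ i, pi i = 1)
    (hstat : ∀ j, ∑ i, pi i * P i j = pi j)
    (α lam : ℝ) (hα0 : 0 < α) (hα1 : α < 1) (hlam0 : 0 ≤ lam) (hlam1 : lam ≤ 1)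
    (Φ : Matrix (Fin n) (Fin K) ℝ)
    (hΦ : LinearIndependent ℝ (fun k : Fin K => fun i : Fin n => Φ i k))
    (D : Matrix (Fin n) (Fin n) ℝ) (hD : D = Matrix.diagonal pi)
    (M : Matrix (Fin n) (Fin n) ℝ)
    (hM : M = (1 - lam) • ∑' m : ℕ, (lam ^ m * α ^ (m + 1)) • P ^ (m + 1))
    (A : Matrix (Fin K) (Fin K) ℝ) (hA : A = Φᵀ * D * (M - 1) * Φ)
    (b : (Fin n → ℝ) → (Fin K → ℝ))
    (hb : ∀ c, b c = (Φᵀ * D * ∑' m : ℕ, (α * lam) ^ m • P ^ m).mulVec c)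
    (Pr : Matrix (Fin n) (Fin n) ℝ) (hPr : Pr = Φ * (Φᵀ * D * Φ)⁻¹ * Φᵀ * D)
    (gbar gt : Fin n → ℝ)
    (Jμ : Fin n → ℝ) (hJμ : Jμ = ((1 - α • P)⁻¹).mulVec gbar)
    (rstar rtstar : Fin K → ℝ)
    (hrstar : A.mulVec rstar + b gbar = 0)
    (hrtstar : A.mulVec rtstar + b gt = 0) :
    normD pi (Φ.mulVec rtstar - Jμ) ≤
      normD pi (Φ.mulVec rtstar - Φ.mulVec rstar) +
        ((1 - lam * α) / Real.sqrt ((1 - α) * (1 + α - 2 * lam * α))) *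
          normD pi ((Pr - 1).mulVec Jμ) :=
  TD_aux P hP0 hP1 pi hpi0 hpi1 hstat α lam hα0 hα1 hlam0 hlam1 Φ hΦ D hD M hM A hA b hb
    Pr hPr gbar gt Jμ hJμ rstar rtstar hrstar hrtstar
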